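/- For any positive integers n, ℓ, m, the number of permutations of {1, ..., n} having exactly ℓ cycles and order dividing m is at most (n-1)!/(ℓ-1)! · (σ(m)/m)^{ℓ-1}, where σ(m) is the sum of divisors of m. -/

import Mathlib

open Equiv Equiv.Perm Finset

namespace Stmt13

variable {n : ℕ}

/-- The orbit (cycle) of `y` under `π`, as a finset. -/
def orb (π : Perm (Fin n)) (y : Fin n) : Finset (Fin n) :=
  Finset.univ.filter (fun z => π.SameCycle y z)

lemma mem_orb {π : Perm (Fin n)} {y z : Fin n} : z ∈ orb π y ↔ π.SameCycle y z := by
  simp [orb]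

lemma self_mem_orb (π : Perm (Fin n)) (y : Fin n) : y ∈ orb π y :=
  mem_orb.2 (Equiv.Perm.SameCycle.refl _ _)

lemma orb_nonempty (π : Perm (Fin n)) (y : Fin n) : (orb π y).Nonempty :=
  ⟨y, self_mem_orb π y⟩

lemma orb_eq_of_sameCycle {π : Perm (Fin n)} {y z : Fin n} (h : π.SameCycle y z) :
    orb π y = orb π z := by
  ext w
  simp only [mem_orb]
  exact ⟨fun hw => h.symm.trans hw, fun hw => h.trans hw⟩

lemma orb_pow_apply (π : Perm (Fin n)) (y : Fin n) (k : ℕ) :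
    orb π ((π ^ k) y) = orb π y :=
  (orb_eq_of_sameCycle ⟨(k : ℤ), by simp [zpow_natCast]⟩).symm

/-- The representative (minimum) of the orbit of `y`. -/
def rep (π : Perm (Fin n)) (y : Fin n) : Fin n :=
  (orb π y).min' (orb_nonempty π y)

lemma rep_mem_orb (π : Perm (Fin n)) (y : Fin n) : rep π y ∈ orb π y :=
  Finset.min'_mem _ _

lemma sameCycle_rep (π : Perm (Fin n)) (y : Fin n) : π.SameCycle y (rep π y) :=
  mem_orb.1 (rep_mem_orb π y)

lemma rep_eq_of_orb_eq {π : Perm (Fin n)} {y z : Fin n} (h : orb π y = orb π z) :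
    rep π y = rep π z := by
  unfold rep
  congr 1

lemma rep_eq_of_sameCycle {π : Perm (Fin n)} {y z : Fin n} (h : π.SameCycle y z) :
    rep π y = rep π z :=
  rep_eq_of_orb_eq (orb_eq_of_sameCycle h)

lemma rep_rep (π : Perm (Fin n)) (y : Fin n) : rep π (rep π y) = rep π y :=
  (rep_eq_of_sameCycle (sameCycle_rep π y)).symm

lemma rep_pow_apply (π : Perm (Fin n)) (y : Fin n) (k : ℕ) :
    rep π ((π ^ k) y) = rep π y :=
  rep_eq_of_orb_eq (orb_pow_apply π y k)

lemma rep_eq_of_orb_eq' {π : Perm (Fin n)} {y : Fin n} {t : Finset (Fin n)}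
    (h : orb π y = t) : rep π y = t.min' (h ▸ orb_nonempty π y) := by
  unfold rep; congr 1

/-- The set of orbit representatives. -/
def reps (π : Perm (Fin n)) : Finset (Fin n) :=
  Finset.univ.filter (fun y => rep π y = y)

lemma mem_reps {π : Perm (Fin n)} {y : Fin n} : y ∈ reps π ↔ rep π y = y := by
  simp [reps]

lemma rep_mem_reps (π : Perm (Fin n)) (y : Fin n) : rep π y ∈ reps π :=
  mem_reps.2 (rep_rep π y)

lemma orb_eq_support_cycleOf {π : Perm (Fin n)} {y : Fin n} (hy : y ∈ π.support) :
    orb π y = (π.cycleOf y).support := by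
  ext z
  rw [mem_orb, Equiv.Perm.mem_support_cycleOf_iff]
  exact ⟨fun h => ⟨h, hy⟩, fun h => h.1⟩

lemma orb_eq_singleton {π : Perm (Fin n)} {y : Fin n} (hy : y ∉ π.support) :
    orb π y = {y} := by
  rw [Equiv.Perm.notMem_support] at hy
  ext z
  rw [mem_orb, Finset.mem_singleton]
  constructor
  · rintro ⟨i, rfl⟩
    rw [eq_comm]
    exact ((Function.IsFixedPt.perm_zpow hy i) : (π ^ i) y = y).symm
  · rintro rfl
    exact Equiv.Perm.SameCycle.refl _ _

lemma isCycleOn_orb (π : Perm (Fin n)) (y : Fin n) : π.IsCycleOn (orb π y) := by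
  by_cases hy : y ∈ π.support
  · rw [orb_eq_support_cycleOf hy]
    exact π.isCycleOn_support_cycleOf y
  · rw [orb_eq_singleton hy]
    rw [Equiv.Perm.notMem_support] at hy
    rw [Finset.coe_singleton]
    exact Equiv.Perm.isCycleOn_singleton.2 hy

lemma card_orb_dvd {π : Perm (Fin n)} {m : ℕ} (h : orderOf π ∣ m) (y : Fin n) :
    (orb π y).card ∣ m := by
  by_cases hy : y ∈ π.support
  · refine dvd_trans ?_ h
    rw [← Equiv.Perm.lcm_cycleType]
    apply Multiset.dvd_lcm
    rw [orb_eq_support_cycleOf hy]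
    rw [Equiv.Perm.cycleType_def]
    rw [Multiset.mem_map]
    exact ⟨π.cycleOf y, (Equiv.Perm.cycleOf_mem_cycleFactorsFinset_iff).2 hy, rfl⟩
  · rw [orb_eq_singleton hy]
    simp

lemma fiber_rep_eq_orb {π : Perm (Fin n)} {r : Fin n} (hr : r ∈ reps π) :
    Finset.univ.filter (fun y => rep π y = r) = orb π r := by
  ext y
  simp only [Finset.mem_filter, Finset.mem_univ, true_and, mem_orb]
  constructor
  · rintro rfl
    exact (sameCycle_rep π y).symm
  · intro h
    rw [rep_eq_of_sameCycle h.symm, mem_reps.1 hr]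

lemma sum_card_orb (π : Perm (Fin n)) :
    ∑ r ∈ reps π, (orb π r).card = n := by
  have := Finset.card_eq_sum_card_fiberwise
    (f := rep π) (s := Finset.univ) (t := reps π) (fun x _ => rep_mem_reps π x)
  rw [Finset.card_univ, Fintype.card_fin] at this
  exact (Finset.sum_congr rfl (fun r hr =>
    (congrArg Finset.card (fiber_rep_eq_orb hr)).symm)).trans this.symm

lemma card_reps (π : Perm (Fin n)) :
    (reps π).card = π.cycleType.card + (n - π.cycleType.sum) := by
  classical
  have hsplit := Finset.card_filter_add_card_filter_not
    (s := reps π) (p := fun y => y ∈ π.support)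
  have h1 : ((reps π).filter (fun y => y ∈ π.support)).card = π.cycleType.card := by
    rw [Equiv.Perm.cycleType_def]
    rw [Multiset.card_map]
    rw [← Finset.card_def]
    apply Finset.card_bij (fun r _ => π.cycleOf r)
    · intro r hr
      simp only [Finset.mem_filter] at hr
      exact (Equiv.Perm.cycleOf_mem_cycleFactorsFinset_iff).2 hr.2
    · intro r hr r' hr' hee
      simp only [Finset.mem_filter, mem_reps] at hr hr'
      have h1 : r' ∈ (π.cycleOf r).support := by
        rw [hee]
        rw [Equiv.Perm.mem_support_cycleOf_iff]
        exact ⟨Equiv.Perm.SameCycle.refl _ _, hr'.2⟩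
      rw [Equiv.Perm.mem_support_cycleOf_iff] at h1
      rw [← hr.1, ← hr'.1]
      exact rep_eq_of_sameCycle h1.1
    · intro f hf
      have hne : f.support.Nonempty := Equiv.Perm.IsCycle.nonempty_support
        (Equiv.Perm.mem_cycleFactorsFinset_iff.1 hf).1
      obtain ⟨a, ha⟩ := hne
      have haS : a ∈ π.support :=
        Equiv.Perm.mem_cycleFactorsFinset_support_le hf ha
      refine ⟨rep π a, ?_, ?_⟩
      · simp only [Finset.mem_filter, mem_reps]
        refine ⟨rep_rep π a, ?_⟩
        have := (sameCycle_rep π a)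
        exact (Equiv.Perm.mem_support_cycleOf_iff.1
          (by rw [← this.cycleOf_eq]
              rw [Equiv.Perm.mem_support_cycleOf_iff]
              exact ⟨this, haS⟩)).2
      · rw [Equiv.Perm.cycle_is_cycleOf ha hf]
        exact ((sameCycle_rep π a).cycleOf_eq).symm
  have h2 : ((reps π).filter (fun y => ¬ y ∈ π.support)).card = n - π.cycleType.sum := by
    have : (reps π).filter (fun y => ¬ y ∈ π.support) = π.supportᶜ := by
      ext y
      simp only [Finset.mem_filter, Finset.mem_compl, mem_reps]
      constructor
      · rintro ⟨_, h⟩; exact h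
      · intro h
        refine ⟨?_, h⟩
        have : orb π y = {y} := orb_eq_singleton h
        rw [rep_eq_of_orb_eq' this]
        exact Finset.min'_singleton y
    rw [this, Finset.card_compl, Fintype.card_fin, Equiv.Perm.sum_cycleType]
  omega



section Main

variable {n L m : ℕ}

def reps' (π : Perm (Fin n)) (x : Fin n) : Finset (Fin n) := (reps π).erase (rep π x)

lemma card_reps' {π : Perm (Fin n)} {x : Fin n} (hL : (reps π).card = L + 1) :
    (reps' π x).card = L := by
  rw [reps', Finset.card_erase_of_mem (rep_mem_reps π x), hL]
  rfl

/-- `n - ∑ c` followed by the `c i`: the block sizes. -/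
def bb (n : ℕ) {L : ℕ} (c : Fin L → ℕ) : Fin (L + 1) → ℕ :=
  Fin.cases (n - ∑ i, c i) c

variable (π : Perm (Fin n)) (x : Fin n) (g : Perm (Fin L)) (r : Fin L → Fin m)

def rho (h : (reps' π x).card = L) (i : Fin L) : Fin n :=
  ((reps' π x).orderIsoOfFin h (g i) : Fin n)

def cc (h : (reps' π x).card = L) (i : Fin L) : ℕ := (orb π (rho π x g h i)).card

def rho' (h : (reps' π x).card = L) : Fin (L + 1) → Fin n :=
  Fin.cases (rep π x) (rho π x g h)

def strt (h : (reps' π x).card = L) : Fin (L + 1) → Fin n :=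
  Fin.cases x (fun j => (π ^ ((r j : ℕ) % cc π x g h j)) (rho π x g h j))

lemma rho_mem_reps' (h : (reps' π x).card = L) (i : Fin L) :
    rho π x g h i ∈ reps' π x :=
  ((reps' π x).orderIsoOfFin h (g i)).2

lemma rho_mem_reps (h : (reps' π x).card = L) (i : Fin L) :
    rho π x g h i ∈ reps π :=
  Finset.mem_of_mem_erase (rho_mem_reps' π x g h i)

lemma rep_rho (h : (reps' π x).card = L) (i : Fin L) :
    rep π (rho π x g h i) = rho π x g h i :=
  mem_reps.1 (rho_mem_reps π x g h i)

lemma rho_injective (h : (reps' π x).card = L) : Function.Injective (rho π x g h) := by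
  intro i j hij
  have := Subtype.ext hij
  exact g.injective (((reps' π x).orderIsoOfFin h).injective this)

lemma rho'_mem_reps (h : (reps' π x).card = L) (i : Fin (L + 1)) :
    rho' π x g h i ∈ reps π := by
  induction i using Fin.cases with
  | zero => simpa [rho'] using rep_mem_reps π x
  | succ j => simpa [rho'] using rho_mem_reps π x g h j

lemma rho'_injective (h : (reps' π x).card = L) : Function.Injective (rho' π x g h) := by
  intro i j hij
  induction i using Fin.cases with
  | zero =>
    induction j using Fin.cases with
    | zero => rfl
    | succ j' =>
      exfalso
      simp only [rho', Fin.cases_zero, Fin.cases_succ] at hij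
      exact Finset.ne_of_mem_erase (rho_mem_reps' π x g h j') hij.symm
  | succ i' =>
    induction j using Fin.cases with
    | zero =>
      exfalso
      simp only [rho', Fin.cases_zero, Fin.cases_succ] at hij
      exact Finset.ne_of_mem_erase (rho_mem_reps' π x g h i') hij
    | succ j' =>
      simp only [rho', Fin.cases_succ] at hij
      rw [rho_injective π x g h hij]

lemma rho'_surjective (h : (reps' π x).card = L) {y : Fin n} (hy : y ∈ reps π) :
    ∃ i, rho' π x g h i = y := by
  by_cases hx : y = rep π x
  · exact ⟨0, by simp [rho', hx]⟩
  · have hy' : y ∈ reps' π x := Finset.mem_erase.2 ⟨hx, hy⟩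
    obtain ⟨j, hj⟩ := ((reps' π x).orderIsoOfFin h).surjective ⟨y, hy'⟩
    refine ⟨(g.symm j).succ, ?_⟩
    simp only [rho', Fin.cases_succ, rho, Equiv.apply_symm_apply, hj]

lemma orb_strt (h : (reps' π x).card = L) (i : Fin (L + 1)) :
    orb π (strt π x g r h i) = orb π (rho' π x g h i) := by
  induction i using Fin.cases with
  | zero =>
    simp only [strt, rho', Fin.cases_zero]
    exact orb_eq_of_sameCycle (sameCycle_rep π x)
  | succ j =>
    simp only [strt, rho', Fin.cases_succ]
    exact orb_pow_apply π _ _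

lemma sum_cc (hL : (reps π).card = L + 1) (h : (reps' π x).card = L) :
    ∑ i : Fin (L + 1), (orb π (rho' π x g h i)).card = n := by
  refine (Finset.sum_bij (fun i _ => rho' π x g h i) ?_ ?_ ?_ ?_).trans (sum_card_orb π)
  · exact fun i _ => rho'_mem_reps π x g h i
  · exact fun i _ j _ hij => rho'_injective π x g h hij
  · intro y hy
    obtain ⟨i, hi⟩ := rho'_surjective π x g h hy
    exact ⟨i, Finset.mem_univ _, hi⟩
  · exact fun i _ => rfl

lemma bb_succ (c : Fin L → ℕ) (j : Fin L) : bb n c j.succ = c j := by simp [bb]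

lemma bb_zero (c : Fin L → ℕ) : bb n c 0 = n - ∑ i, c i := by simp [bb]

lemma bb_eq (hL : (reps π).card = L + 1) (h : (reps' π x).card = L) (i : Fin (L + 1)) :
    bb n (cc π x g h) i = (orb π (rho' π x g h i)).card := by
  have hsum := sum_cc π x g hL h
  rw [Fin.sum_univ_succ] at hsum
  induction i using Fin.cases with
  | zero =>
    rw [bb_zero]
    have hc : ∀ j : Fin L, (orb π (rho' π x g h j.succ)).card = cc π x g h j := by
      intro j; simp [rho', cc]
    simp only [hc] at hsum
    simp only [rho', Fin.cases_zero] at hsum ⊢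
    omega
  | succ j =>
    rw [bb_succ]
    simp [rho', cc]

lemma card_sigma_bb (hL : (reps π).card = L + 1) (h : (reps' π x).card = L) :
    Fintype.card (Σ i : Fin (L + 1), Fin (bb n (cc π x g h) i)) = Fintype.card (Fin n) := by
  simp only [Fintype.card_sigma, Fintype.card_fin]
  calc ∑ i : Fin (L + 1), bb n (cc π x g h) i
      = ∑ i : Fin (L + 1), (orb π (rho' π x g h i)).card :=
        Finset.sum_congr rfl fun i _ => bb_eq π x g hL h i
    _ = n := sum_cc π x g hL h

def Efun (h : (reps' π x).card = L) :
    (Σ i : Fin (L + 1), Fin (bb n (cc π x g h) i)) → Fin n :=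
  fun p => (π ^ (p.2 : ℕ)) (strt π x g r h p.1)

lemma rep_strt (h : (reps' π x).card = L) (i : Fin (L + 1)) :
    rep π (strt π x g r h i) = rho' π x g h i := by
  have h1 : rep π (strt π x g r h i) = rep π (rho' π x g h i) :=
    rep_eq_of_orb_eq (orb_strt π x g r h i)
  rw [h1, mem_reps.1 (rho'_mem_reps π x g h i)]

lemma Efun_injective (hL : (reps π).card = L + 1) (h : (reps' π x).card = L) :
    Function.Injective (Efun π x g r h) := by
  rintro ⟨i, k⟩ ⟨j, k'⟩ he
  simp only [Efun] at he
  have hsame : π.SameCycle (strt π x g r h i) (strt π x g r h j) := by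
    have h1 : π.SameCycle (strt π x g r h i) ((π ^ (k : ℕ)) (strt π x g r h i)) :=
      ⟨((k : ℕ) : ℤ), by simp [zpow_natCast]⟩
    have h2 : π.SameCycle (strt π x g r h j) ((π ^ (k' : ℕ)) (strt π x g r h j)) :=
      ⟨((k' : ℕ) : ℤ), by simp [zpow_natCast]⟩
    exact h1.trans (he ▸ h2.symm)
  have hij : i = j := by
    apply rho'_injective π x g h
    rw [← rep_strt π x g r h i, ← rep_strt π x g r h j]
    exact rep_eq_of_sameCycle hsame
  subst hij
  have hbi : bb n (cc π x g h) i = (orb π (strt π x g r h i)).card := by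
    rw [bb_eq π x g hL h i, orb_strt π x g r h i]
  have hk : (k : ℕ) = (k' : ℕ) := by
    have hcyc := isCycleOn_orb π (strt π x g r h i)
    have hmem := self_mem_orb π (strt π x g r h i)
    have hmod := (hcyc.pow_apply_eq_pow_apply hmem).1 he
    have hk1 : (k : ℕ) < (orb π (strt π x g r h i)).card := by
      rw [← hbi]; exact k.isLt
    have hk2 : (k' : ℕ) < (orb π (strt π x g r h i)).card := by
      rw [← hbi]; exact k'.isLt
    rwa [Nat.ModEq, Nat.mod_eq_of_lt hk1, Nat.mod_eq_of_lt hk2] at hmod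
  obtain rfl : k = k' := Fin.ext hk
  rfl

lemma Efun_bijective (hL : (reps π).card = L + 1) (h : (reps' π x).card = L) :
    Function.Bijective (Efun π x g r h) :=
  (Fintype.bijective_iff_injective_and_card _).2
    ⟨Efun_injective π x g r hL h, by rw [card_sigma_bb π x g hL h, Fintype.card_fin]⟩

noncomputable def EE (hL : (reps π).card = L + 1) (h : (reps' π x).card = L) :
    Fin n ≃ Fin n :=
  (Fintype.equivOfCardEq (card_sigma_bb π x g hL h)).symm.trans
    (Equiv.ofBijective _ (Efun_bijective π x g r hL h))

lemma EE_apply (hL : (reps π).card = L + 1) (h : (reps' π x).card = L)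
    (p : Σ i : Fin (L + 1), Fin (bb n (cc π x g h) i)) :
    EE π x g r hL h (Fintype.equivOfCardEq (card_sigma_bb π x g hL h) p) =
      Efun π x g r h p := by
  simp [EE, Equiv.trans_apply, Equiv.symm_apply_apply]

end Main



section Recover

variable {n L m : ℕ}

def rot (n : ℕ) {L : ℕ} (c : Fin L → ℕ) :
    (Σ i : Fin (L + 1), Fin (bb n c i)) → (Σ i : Fin (L + 1), Fin (bb n c i)) :=
  fun p => ⟨p.1, ⟨((p.2 : ℕ) + 1) % bb n c p.1, Nat.mod_lt _ p.2.pos⟩⟩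

noncomputable def recoverPi (n L : ℕ) (c : Fin L → ℕ) (E : Fin n ≃ Fin n) : Fin n → Fin n :=
  if h : Fintype.card (Σ i : Fin (L + 1), Fin (bb n c i)) = Fintype.card (Fin n) then
    fun y => E ((Fintype.equivOfCardEq h)
      (rot n c ((Fintype.equivOfCardEq h).symm (E.symm y))))
  else id

noncomputable def recoverBlk (n L : ℕ) (hn : 0 < n) (c : Fin L → ℕ) (E : Fin n ≃ Fin n)
    (i : Fin (L + 1)) : Fin n :=
  if h : (Fintype.card (Σ i : Fin (L + 1), Fin (bb n c i)) = Fintype.card (Fin n))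
      ∧ 0 < bb n c i then
    E ((Fintype.equivOfCardEq h.1) ⟨i, ⟨0, h.2⟩⟩)
  else ⟨0, hn⟩

variable (π : Perm (Fin n)) (x : Fin n) (g : Perm (Fin L)) (r : Fin L → Fin m)

lemma pi_Efun (hL : (reps π).card = L + 1) (h : (reps' π x).card = L)
    (p : Σ i : Fin (L + 1), Fin (bb n (cc π x g h) i)) :
    π (Efun π x g r h p) = Efun π x g r h (rot n (cc π x g h) p) := by
  obtain ⟨i, k⟩ := p
  simp only [Efun, rot]
  have hbi : bb n (cc π x g h) i = (orb π (strt π x g r h i)).card := by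
    rw [bb_eq π x g hL h i, orb_strt π x g r h i]
  have hstep : π ((π ^ (k : ℕ)) (strt π x g r h i)) =
      (π ^ ((k : ℕ) + 1)) (strt π x g r h i) := by
    rw [← Equiv.Perm.mul_apply, ← pow_succ']
  rw [hstep]
  rcases Nat.lt_or_ge ((k : ℕ) + 1) (bb n (cc π x g h) i) with hlt | hge
  · rw [Nat.mod_eq_of_lt hlt]
  · have heq : (k : ℕ) + 1 = bb n (cc π x g h) i := le_antisymm k.isLt hge
    have hmod0 : ((k : ℕ) + 1) % bb n (cc π x g h) i = 0 := by rw [heq, Nat.mod_self]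
    rw [hmod0, pow_zero, heq, hbi]
    have hcyc := isCycleOn_orb π (strt π x g r h i)
    rw [hcyc.pow_card_apply (self_mem_orb π (strt π x g r h i))]
    simp

lemma recoverPi_eq (hL : (reps π).card = L + 1) (h : (reps' π x).card = L) :
    recoverPi n L (cc π x g h) (EE π x g r hL h) = ⇑π := by
  funext y
  rw [recoverPi, dif_pos (card_sigma_bb π x g hL h)]
  set F := Fintype.equivOfCardEq (card_sigma_bb π x g hL h) with hF
  have hEsymm : F.symm ((EE π x g r hL h).symm y) =
      (Equiv.ofBijective _ (Efun_bijective π x g r hL h)).symm y := by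
    simp [EE, Equiv.symm_apply_apply, hF]
  rw [hEsymm]
  set p := (Equiv.ofBijective _ (Efun_bijective π x g r hL h)).symm y with hp
  have hy : Efun π x g r h p = y := by
    exact (Equiv.ofBijective _ (Efun_bijective π x g r hL h)).apply_symm_apply y
  rw [EE_apply π x g r hL h]
  rw [← hy, pi_Efun π x g r hL h p]

lemma recoverBlk_eq (hn : 0 < n) (hL : (reps π).card = L + 1) (h : (reps' π x).card = L)
    (i : Fin (L + 1)) (hpos : 0 < bb n (cc π x g h) i) :
    recoverBlk n L hn (cc π x g h) (EE π x g r hL h) i = strt π x g r h i := by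
  rw [recoverBlk, dif_pos ⟨card_sigma_bb π x g hL h, hpos⟩]
  rw [EE_apply π x g r hL h ⟨i, ⟨0, hpos⟩⟩]
  simp [Efun]

lemma bb_pos (hL : (reps π).card = L + 1) (h : (reps' π x).card = L) (i : Fin (L + 1)) :
    0 < bb n (cc π x g h) i := by
  rw [bb_eq π x g hL h i]
  exact Finset.card_pos.2 (orb_nonempty π _)

end Recover


section Theta

variable (n L m : ℕ)

def Valid (ℓ : ℕ) (π : Perm (Fin n)) : Prop :=
  π.cycleType.card + (n - π.cycleType.sum) = ℓ ∧ orderOf π ∣ m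

variable {n L m}

lemma valid_hL {π : Perm (Fin n)} (hπ : Valid n m (L + 1) π) : (reps π).card = L + 1 := by
  rw [card_reps π]; exact hπ.1

variable (n L m)

noncomputable def theta (hm : 0 < m)
    (a : {π : Perm (Fin n) // Valid n m (L + 1) π} ×
      Fin n × Perm (Fin L) × (Fin L → Fin m)) :
    Perm (Fin n) × (Fin L → Σ d : {d // d ∈ m.divisors}, Fin (m / d)) :=
  ⟨EE a.1.1 a.2.1 a.2.2.1 a.2.2.2 (valid_hL a.1.2) (card_reps' (valid_hL a.1.2)),
   fun i => ⟨⟨cc a.1.1 a.2.1 a.2.2.1 (card_reps' (valid_hL a.1.2)) i,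
      Nat.mem_divisors.2 ⟨card_orb_dvd a.1.2.2 _, hm.ne'⟩⟩,
    ⟨(a.2.2.2 i : ℕ) / cc a.1.1 a.2.1 a.2.2.1 (card_reps' (valid_hL a.1.2)) i,
      Nat.div_lt_div_of_lt_of_dvd (card_orb_dvd a.1.2.2 _) (a.2.2.2 i).isLt⟩⟩⟩

theorem theta_injective (hm : 0 < m) : Function.Injective (theta n L m hm) := by
  rintro ⟨⟨π, hπ⟩, x, g, r⟩ ⟨⟨π', hπ'⟩, x', g', r'⟩ heq
  have hn : 0 < n := x.pos
  have hL : (reps π).card = L + 1 := valid_hL hπ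
  have h : (reps' π x).card = L := card_reps' hL
  have hL' : (reps π').card = L + 1 := valid_hL hπ'
  have h' : (reps' π' x').card = L := card_reps' hL'
  have hE : EE π x g r hL h = EE π' x' g' r' hL' h' := congrArg Prod.fst heq
  have hD := congrArg Prod.snd heq
  have hc : ∀ i, cc π x g h i = cc π' x' g' h' i := fun i =>
    congrArg (fun s => (s.1 : ℕ)) (congrFun hD i)
  have hcf : cc π x g h = cc π' x' g' h' := funext hc
  -- recover π
  have hpi : ⇑π = ⇑π' := by
    rw [← recoverPi_eq π x g r hL h, ← recoverPi_eq π' x' g' r' hL' h', hcf, hE]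
  obtain rfl : π = π' := Equiv.coe_fn_injective hpi
  -- recover x
  obtain rfl : x = x' := by
    have e1 := recoverBlk_eq π x g r hn hL h 0 (bb_pos π x g hL h 0)
    have e2 := recoverBlk_eq π x' g' r' hn hL' h' 0 (bb_pos π x' g' hL' h' 0)
    calc x = recoverBlk n L hn (cc π x g h) (EE π x g r hL h) 0 := by
            rw [e1]; simp [strt]
      _ = recoverBlk n L hn (cc π x' g' h') (EE π x' g' r' hL' h') 0 := by rw [hcf, hE]
      _ = x' := by rw [e2]; simp [strt]
  -- the two sets of block starts agree
  have hstrt : ∀ i : Fin (L + 1), strt π x g r h i = strt π x g' r' h' i := by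
    intro i
    have e1 := recoverBlk_eq π x g r hn hL h i (bb_pos π x g hL h i)
    have e2 := recoverBlk_eq π x g' r' hn hL' h' i (bb_pos π x g' hL' h' i)
    calc strt π x g r h i
        = recoverBlk n L hn (cc π x g h) (EE π x g r hL h) i := e1.symm
      _ = recoverBlk n L hn (cc π x g' h') (EE π x g' r' hL' h') i := by rw [hcf, hE]
      _ = strt π x g' r' h' i := e2
  -- recover g
  obtain rfl : g = g' := by
    apply Equiv.ext
    intro i
    have h3 : rho π x g h i = rho π x g' h' i := by
      have := hstrt i.succ
      have hr1 := rep_strt π x g r h i.succ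
      have hr2 := rep_strt π x g' r' h' i.succ
      rw [this] at hr1
      rw [hr2] at hr1
      simpa [rho'] using hr1.symm
    have h4 : ((reps' π x).orderIsoOfFin h) (g i) = ((reps' π x).orderIsoOfFin h) (g' i) :=
      Subtype.coe_injective h3
    exact ((reps' π x).orderIsoOfFin h).injective h4
  -- recover r
  obtain rfl : r = r' := by
    funext i
    have hci : 0 < cc π x g h i := Finset.card_pos.2 (orb_nonempty π _)
    have hs : (r i : ℕ) % cc π x g h i = (r' i : ℕ) % cc π x g h i := by
      have := hstrt i.succ
      simp only [strt, Fin.cases_succ] at this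
      have hcyc := isCycleOn_orb π (rho π x g h i)
      have hmem := self_mem_orb π (rho π x g h i)
      have hmod := (hcyc.pow_apply_eq_pow_apply hmem).1 this
      have hlt1 : (r i : ℕ) % cc π x g h i < (orb π (rho π x g h i)).card :=
        Nat.mod_lt _ hci
      have hlt2 : (r' i : ℕ) % cc π x g h i < (orb π (rho π x g h i)).card :=
        Nat.mod_lt _ hci
      rwa [Nat.ModEq, Nat.mod_eq_of_lt hlt1, Nat.mod_eq_of_lt hlt2] at hmod
    have hq : (r i : ℕ) / cc π x g h i = (r' i : ℕ) / cc π x g h i := by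
      have hDi := congrFun hD i
      simp only [theta] at hDi
      have h2 := eq_of_heq (Sigma.mk.inj_iff.1 hDi).2
      exact congrArg Fin.val h2
    apply Fin.ext
    rw [← Nat.div_add_mod ((r i : ℕ)) (cc π x g h i),
      ← Nat.div_add_mod ((r' i : ℕ)) (cc π x g h i), hq, hs]
  rfl

end Theta


section Count

variable {n L m : ℕ}

theorem main_count (hm : 0 < m) :
    Nat.card {π : Perm (Fin n) // Valid n m (L + 1) π} * (n * (Nat.factorial L * m ^ L)) ≤
      Nat.factorial n * (∑ d ∈ m.divisors, d) ^ L := by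
  have hle := Nat.card_le_card_of_injective _ (theta_injective n L m hm)
  have hA : Nat.card ({π : Perm (Fin n) // Valid n m (L + 1) π} ×
      Fin n × Perm (Fin L) × (Fin L → Fin m)) =
      Nat.card {π : Perm (Fin n) // Valid n m (L + 1) π} *
        (n * (Nat.factorial L * m ^ L)) := by
    rw [Nat.card_prod, Nat.card_prod, Nat.card_prod]
    simp [Nat.card_eq_fintype_card, Fintype.card_fin, Fintype.card_perm, Fintype.card_fun]
  have hB : Nat.card (Perm (Fin n) × (Fin L → Σ d : {d // d ∈ m.divisors}, Fin (m / d))) =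
      Nat.factorial n * (∑ d ∈ m.divisors, d) ^ L := by
    rw [Nat.card_prod]
    have h1 : Nat.card (Perm (Fin n)) = Nat.factorial n := by
      simp [Nat.card_eq_fintype_card, Fintype.card_perm, Fintype.card_fin]
    have h2 : Nat.card (Σ d : {d // d ∈ m.divisors}, Fin (m / d)) =
        ∑ d ∈ m.divisors, d := by
      rw [Nat.card_eq_fintype_card, Fintype.card_sigma]
      simp only [Fintype.card_fin]
      rw [Finset.sum_coe_sort m.divisors (fun d => m / d)]
      exact Nat.sum_div_divisors m id
    have h3 : Nat.card (Fin L → Σ d : {d // d ∈ m.divisors}, Fin (m / d)) =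
        (∑ d ∈ m.divisors, d) ^ L := by
      rw [Nat.card_eq_fintype_card, Fintype.card_fun, ← Nat.card_eq_fintype_card, h2,
        Fintype.card_fin]
    rw [h1, h3]
  rw [hA, hB] at hle
  exact hle

end Count

end Stmt13

theorem stmt_13 (n ℓ m : ℕ) (hn : 0 < n) (hℓ : 0 < ℓ) (hm : 0 < m) :
    (Nat.card {π : Equiv.Perm (Fin n) //
        π.cycleType.card + (n - π.cycleType.sum) = ℓ ∧ orderOf π ∣ m} : ℝ) ≤
      Nat.factorial (n - 1) / Nat.factorial (ℓ - 1) *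
        ((∑ d ∈ m.divisors, (d : ℝ)) / m) ^ (ℓ - 1) := by
  obtain ⟨L, rfl⟩ : ∃ L, ℓ = L + 1 := ⟨ℓ - 1, (Nat.succ_pred_eq_of_pos hℓ).symm⟩
  have hkey := Stmt13.main_count (n := n) (L := L) (m := m) hm
  have hLsimp : L + 1 - 1 = L := rfl
  rw [hLsimp]
  set Count := Nat.card {π : Equiv.Perm (Fin n) //
      π.cycleType.card + (n - π.cycleType.sum) = L + 1 ∧ orderOf π ∣ m} with hC
  have hCount : Nat.card {π : Equiv.Perm (Fin n) // Stmt13.Valid n m (L + 1) π} = Count := rfl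
  rw [hCount] at hkey
  set σ : ℝ := ∑ d ∈ m.divisors, (d : ℝ) with hσ
  have hσcast : ((∑ d ∈ m.divisors, d : ℕ) : ℝ) = σ := by
    rw [hσ]; push_cast; rfl
  have key : (Count : ℝ) * (n * (Nat.factorial L * (m : ℝ) ^ L)) ≤
      Nat.factorial n * σ ^ L := by
    rw [← hσcast]
    exact_mod_cast hkey
  have hn' : (0 : ℝ) < n := by exact_mod_cast hn
  have hm' : (0 : ℝ) < m := by exact_mod_cast hm
  have hL' : (0 : ℝ) < Nat.factorial L := by exact_mod_cast Nat.factorial_pos L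
  have h0 : Nat.factorial (n - 1) * n = Nat.factorial n := by
    rw [mul_comm]; exact Nat.mul_factorial_pred hn.ne'
  have h1 : ((Nat.factorial (n - 1) : ℝ)) = (Nat.factorial n : ℝ) / n := by
    rw [eq_div_iff hn'.ne']
    exact_mod_cast h0
  have hrhs : ((Nat.factorial (n - 1) : ℝ)) / (Nat.factorial L) * (σ / m) ^ L =
      ((Nat.factorial n : ℝ) * σ ^ L) / (n * (Nat.factorial L * (m : ℝ) ^ L)) := by
    rw [h1, div_pow, div_div, div_mul_div_comm, mul_assoc]
  rw [hrhs, le_div_iff₀ (by positivity)]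
  exact key
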